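/- For χ : L → Ĝ, the Wilson line operator W^χ commutes with the gauge transformation U^g for every g : V → G if and only if ∂ χ is the trivial configuration (i.e., (∂ χ) v = 1 in Ĝ for every vertex v). In other words, a Wilson line operator is a logical (gauge-invariant) operator of the Gauss law code precisely when it has trivial Gauss law syndrome. -/
import Mathlib


open Finset

variable {V L : Type*} [Fintype V] [Fintype L] [DecidableEq V]
variable {G : Type*} [CommGroup G] [Fintype G]

/-- The gauge transformation `U^g` on the kinematical Hilbert space `(L → G) → ℂ`. -/
def Ugauge (s t : L → V) (g : V → G) : ((L → G) → ℂ) → ((L → G) → ℂ) :=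
  fun f a => f fun ℓ => (g (s ℓ))⁻¹ * a ℓ * g (t ℓ)

/-- The Wilson line (multiplication) operator `W^χ` for a family of characters `χ`. -/
def Wline (χ : L → (G →* ℂˣ)) : ((L → G) → ℂ) → ((L → G) → ℂ) :=
  fun f a => (((∏ ℓ, χ ℓ (a ℓ))⁻¹ : ℂˣ) : ℂ) • f a

/-- The Gauss law map `∂`, assigning to link character data the vertex charge it excites. -/
def gaussMap (s t : L → V) (χ : L → (G →* ℂˣ)) : V → (G →* ℂˣ) :=
  fun v => (∏ ℓ ∈ univ.filter fun ℓ => s ℓ = v, χ ℓ) *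
    ∏ ℓ ∈ univ.filter fun ℓ => t ℓ = v, (χ ℓ)⁻¹


lemma key_prod (s t : L → V) (χ : L → (G →* ℂˣ)) (g : V → G) :
    (∏ v, gaussMap s t χ v (g v))
      = (∏ ℓ, χ ℓ (g (s ℓ))) * ∏ ℓ, (χ ℓ (g (t ℓ)))⁻¹ := by
  simp only [gaussMap, MonoidHom.mul_apply, MonoidHom.finset_prod_apply, MonoidHom.inv_apply]
  rw [Finset.prod_mul_distrib]
  congr 1
  · rw [← Finset.prod_fiberwise univ s (fun ℓ => χ ℓ (g (s ℓ)))]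
    exact Finset.prod_congr rfl fun v _ => Finset.prod_congr rfl fun ℓ hℓ => by
      rw [(mem_filter.mp hℓ).2]
  · rw [← Finset.prod_fiberwise univ t (fun ℓ => (χ ℓ (g (t ℓ)))⁻¹)]
    exact Finset.prod_congr rfl fun v _ => Finset.prod_congr rfl fun ℓ hℓ => by
      rw [(mem_filter.mp hℓ).2]

lemma twisted_prod (s t : L → V) (χ : L → (G →* ℂˣ)) (g : V → G) (a : L → G) :
    (∏ ℓ, χ ℓ ((g (s ℓ))⁻¹ * a ℓ * g (t ℓ)))
      = (∏ v, gaussMap s t χ v (g v))⁻¹ * ∏ ℓ, χ ℓ (a ℓ) := by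
  simp only [key_prod, map_mul, map_inv, Finset.prod_mul_distrib, Finset.prod_inv_distrib,
    mul_inv, inv_inv]
  exact mul_right_comm _ _ _

/-- A Wilson line operator commutes with every gauge transformation (i.e., is a logical
operator of the Gauss law code) if and only if its Gauss law syndrome is trivial. -/
theorem wilson_logical_iff_trivial_syndrome (s t : L → V) (χ : L → (G →* ℂˣ)) :
    (∀ g : V → G, Ugauge s t g ∘ Wline χ = Wline χ ∘ Ugauge s t g) ↔
      ∀ v : V, gaussMap s t χ v = 1 := by
  constructor
  · intro h v
    ext x
    set g : V → G := Function.update (fun _ => (1 : G)) v x with hg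
    have hc := congrFun (congrFun (h g) (fun _ => (1 : ℂ))) (fun _ => (1 : G))
    simp only [Function.comp_apply, Ugauge, Wline, map_one, smul_eq_mul, mul_one,
      Finset.prod_const_one, inv_one, Units.val_one, one_mul] at hc
    have hu : (∏ ℓ, χ ℓ ((g (s ℓ))⁻¹ * g (t ℓ)))⁻¹ = (1 : ℂˣ) := Units.ext (by
      simpa using hc)
    have hu1 : (∏ ℓ, χ ℓ ((g (s ℓ))⁻¹ * g (t ℓ))) = (1 : ℂˣ) := by
      rw [← inv_inv (∏ ℓ, χ ℓ ((g (s ℓ))⁻¹ * g (t ℓ))), hu, inv_one]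
    have ht := twisted_prod s t χ g (fun _ => (1 : G))
    simp only [map_one, mul_one, Finset.prod_const_one] at ht
    have hprod : (∏ w, gaussMap s t χ w (g w)) = 1 := by
      rw [← inv_inv (∏ w, gaussMap s t χ w (g w)), ← ht, hu1, inv_one]
    have : (∏ w, gaussMap s t χ w (g w)) = gaussMap s t χ v x := by
      refine Finset.prod_eq_single v (fun w _ hw => ?_) (fun hv => absurd (Finset.mem_univ v) hv) |>.trans ?_
      · have : g w = 1 := Function.update_of_ne hw _ _
        rw [this, map_one]
      · rw [hg, Function.update_self]
    rw [← this, hprod, MonoidHom.one_apply]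
  · intro h g
    funext f a
    simp only [Function.comp_apply, Ugauge, Wline]
    have := twisted_prod s t χ g a
    simp only [h, MonoidHom.one_apply, Finset.prod_const_one, inv_one, one_mul] at this
    rw [this]
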